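/- arXiv:1807.08263 — 3 statements merged into one kernel-verified Lean document; each statement's English description precedes it below -/
import Mathlib

section
/- Let α > 0, b ≥ 2 an integer, T a positive integer, and ℓ > 0. If nonnegative reals x̄_1, …, x̄_T satisfy ∑_{k=1}^T x̄_k ≥ ℓ, then max_{1 ≤ k ≤ T} (x̄_k^α + k log b) ≥ (((α+1)/α) · (log b) · ℓ)^{α/(α+1)}, provided this maximum is at least T log b. -/
open Real Finset

lemma convex_rpow_aux (c L β : ℝ) (hc : 0 ≤ c) (hL : 0 ≤ L) (hβ : 1 < β) :
    c ^ β + β * c ^ (β - 1) * L ≤ (c + L) ^ β := by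
  rcases eq_or_lt_of_le hc with rfl | hc
  · rw [Real.zero_rpow (by positivity), Real.zero_rpow (by linarith)]
    simp only [zero_add, mul_zero, zero_mul]
    exact Real.rpow_nonneg hL β
  · have hs : -1 ≤ L / c := le_trans (by norm_num) (by positivity : (0:ℝ) ≤ L / c)
    have h := one_add_mul_self_le_rpow_one_add hs hβ.le
    have hcb : (0:ℝ) < c ^ β := Real.rpow_pos_of_pos hc β
    have key : c ^ β * (1 + β * (L / c)) ≤ c ^ β * (1 + L / c) ^ β :=
      mul_le_mul_of_nonneg_left h hcb.le
    calc c ^ β + β * c ^ (β - 1) * L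
        = c ^ β * (1 + β * (L / c)) := by
          rw [Real.rpow_sub_one hc.ne']
          field_simp
      _ ≤ c ^ β * (1 + L / c) ^ β := key
      _ = (c + L) ^ β := by
          rw [← Real.mul_rpow hc.le (by positivity)]
          congr 1
          field_simp

theorem max_optimization_bound (α : ℝ) (hα : 0 < α) (b : ℕ) (hb : 2 ≤ b)
    (T : ℕ) (hT : 0 < T) (ℓ : ℝ) (hℓ : 0 < ℓ)
    (x : ℕ → ℝ) (hx : ∀ k, 0 ≤ x k)
    (hsum : ℓ ≤ ∑ k ∈ Finset.Icc 1 T, x k)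
    (hne : (Finset.Icc 1 T).Nonempty)
    (hmax : (T : ℝ) * Real.log b ≤
      (Finset.Icc 1 T).sup' hne fun k => x k ^ α + (k : ℝ) * Real.log b) :
    ((α + 1) / α * Real.log b * ℓ) ^ (α / (α + 1)) ≤
      (Finset.Icc 1 T).sup' hne fun k => x k ^ α + (k : ℝ) * Real.log b := by
  set L := Real.log b with hLdef
  have hL : 0 < L := Real.log_pos (by exact_mod_cast hb.trans_lt' one_lt_two)
  set Ξ := (Finset.Icc 1 T).sup' hne fun k => x k ^ α + (k : ℝ) * L with hΞdef
  have hΞle : ∀ k ∈ Finset.Icc 1 T, x k ^ α + (k : ℝ) * L ≤ Ξ := fun k hk =>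
    Finset.le_sup' (fun k => x k ^ α + (k : ℝ) * L) hk
  have hΞ0 : 0 < Ξ := lt_of_lt_of_le (by positivity) hmax
  set β : ℝ := (α + 1) / α with hβdef
  have hβ1 : 1 < β := by
    rw [hβdef, lt_div_iff₀ hα]; linarith
  have hβm1 : β - 1 = 1 / α := by rw [hβdef]; field_simp; ring
  -- f i = (Ξ - i L)^β
  set f : ℕ → ℝ := fun i => (Ξ - (i : ℝ) * L) ^ β with hfdef
  have key : ∀ k ∈ Finset.Icc 1 T, x k ≤ α / ((α + 1) * L) * (f (k - 1) - f k) := by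
    intro k hk
    obtain ⟨hk1, hkT⟩ := Finset.mem_Icc.mp hk
    have hc0 : 0 ≤ Ξ - (k : ℝ) * L := by
      have : (k : ℝ) * L ≤ (T : ℝ) * L := by
        apply mul_le_mul_of_nonneg_right _ hL.le
        exact_mod_cast hkT
      linarith [hmax]
    have hxk : x k ^ α ≤ Ξ - (k : ℝ) * L := by linarith [hΞle k hk]
    have hxk' : x k ≤ (Ξ - (k : ℝ) * L) ^ (1 / α) := by
      calc x k = (x k ^ α) ^ (1 / α) := by
            rw [← Real.rpow_mul (hx k), mul_one_div, div_self hα.ne', Real.rpow_one]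
          _ ≤ (Ξ - (k : ℝ) * L) ^ (1 / α) :=
            Real.rpow_le_rpow (Real.rpow_nonneg (hx k) α) hxk (by positivity)
    have hcast : ((k - 1 : ℕ) : ℝ) = (k : ℝ) - 1 := by
      have : 1 ≤ k := hk1
      push_cast [this]; ring
    have hfk1 : f (k - 1) = ((Ξ - (k : ℝ) * L) + L) ^ β := by
      rw [hfdef]; simp only [hcast]; ring_nf
    have hconv := convex_rpow_aux (Ξ - (k : ℝ) * L) L β hc0 hL.le hβ1
    have hβpos : 0 < β := lt_trans one_pos hβ1
    have hstep : β * (Ξ - (k : ℝ) * L) ^ (1 / α) * L ≤ f (k - 1) - f k := by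
      rw [hfk1, hfdef]
      simp only [← hβm1]
      linarith [hconv]
    have hden : 0 < (α + 1) * L := by positivity
    have : x k ≤ α / ((α + 1) * L) * (β * (Ξ - (k : ℝ) * L) ^ (1 / α) * L) := by
      have : α / ((α + 1) * L) * (β * (Ξ - (k : ℝ) * L) ^ (1 / α) * L)
          = (Ξ - (k : ℝ) * L) ^ (1 / α) := by
        rw [hβdef]; field_simp
      rw [this]; exact hxk'
    calc x k ≤ α / ((α + 1) * L) * (β * (Ξ - (k : ℝ) * L) ^ (1 / α) * L) := this
      _ ≤ α / ((α + 1) * L) * (f (k - 1) - f k) := by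
          apply mul_le_mul_of_nonneg_left _ (by positivity)
          linarith
  -- sum up
  have hsum2 : ℓ ≤ α / ((α + 1) * L) * (f 0 - f T) := by
    have h1 : ∑ k ∈ Finset.Icc 1 T, x k ≤
        ∑ k ∈ Finset.Icc 1 T, α / ((α + 1) * L) * (f (k - 1) - f k) :=
      Finset.sum_le_sum key
    have h2 : ∑ k ∈ Finset.Icc 1 T, (f (k - 1) - f k) = f 0 - f T := by
      have : ∑ k ∈ Finset.Icc 1 T, (f (k - 1) - f k)
          = ∑ i ∈ Finset.range T, (f i - f (i + 1)) := by
        rw [← Finset.Ico_add_one_right_eq_Icc, Finset.sum_Ico_eq_sum_range]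
        apply Finset.sum_congr (by simp)
        intro i _
        have h1 : 1 + i - 1 = i := by omega
        have h2 : 1 + i = i + 1 := by omega
        rw [h1, h2]
      rw [this, Finset.sum_range_sub' f]
    rw [← Finset.mul_sum, h2] at h1
    linarith
  have hfT : 0 ≤ f T := by
    apply Real.rpow_nonneg
    linarith [hmax]
  have hf0 : f 0 = Ξ ^ β := by simp [hfdef]
  have hmain : ℓ ≤ α / ((α + 1) * L) * Ξ ^ β := by
    have : f 0 - f T ≤ Ξ ^ β := by rw [hf0]; linarith
    calc ℓ ≤ α / ((α + 1) * L) * (f 0 - f T) := hsum2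
      _ ≤ α / ((α + 1) * L) * Ξ ^ β := by
          apply mul_le_mul_of_nonneg_left this (by positivity)
  have hfinal : (α + 1) / α * L * ℓ ≤ Ξ ^ β := by
    have hα' : α ≠ 0 := hα.ne'
    have hL' : L ≠ 0 := hL.ne'
    have hα1 : α + 1 ≠ 0 := by positivity
    have hc : ((α + 1) * L) / α * (α / ((α + 1) * L) * Ξ ^ β) = Ξ ^ β := by
      field_simp
    have h := mul_le_mul_of_nonneg_left hmain
      (by positivity : (0:ℝ) ≤ ((α + 1) * L) / α)
    rw [hc] at h
    calc (α + 1) / α * L * ℓ = ((α + 1) * L) / α * ℓ := by ring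
      _ ≤ Ξ ^ β := h
  calc ((α + 1) / α * L * ℓ) ^ (α / (α + 1))
      ≤ (Ξ ^ β) ^ (α / (α + 1)) :=
        Real.rpow_le_rpow (by positivity) hfinal (by positivity)
    _ = Ξ := by
        rw [← Real.rpow_mul hΞ0.le, hβdef]
        rw [div_mul_div_comm]
        rw [mul_comm (α+1) α, div_self (by positivity)]
        exact Real.rpow_one Ξ
end

section
/- Let b ≥ 2, T ≥ s ≥ 1 integers and let t be the b-ary tree of depth T pruned at a vertex u* of depth s. Suppose edge labels x_v ≥ 0 are assigned to all vertices v ∈ t \\ {root}, and set s_u = ∑_{root ≺ v ⪯ u} x_v. If s_u ≥ ℓ for every vertex u at depth T of t, then ∑_{k=1}^T x̄_k ≥ (1 - b^{-s}) ℓ, where x̄_k is the average of x_v over vertices v of t at depth k. -/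
open scoped Classical

/-- A vertex `v` at depth `k` of the complete `b`-ary tree belongs to the tree pruned
at the vertex `u` of depth `s` iff the first `s` coordinates of `v` do not all agree
with `u`. -/
def prunedKept (b s k : ℕ) (u : Fin s → Fin b) (v : Fin k → Fin b) : Prop :=
  ∀ h : s ≤ k, ∃ i : Fin s, v (Fin.castLE h i) ≠ u i

-- card of "agree with v on first k coords" set is ≤ b^(T-k)
lemma cardA {b k T : ℕ} (hk : k ≤ T) (v : Fin k → Fin b) :
    (Finset.univ.filter fun w : Fin T → Fin b => ∀ i, w (Fin.castLE hk i) = v i).card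
      ≤ b ^ (T - k) := by
  classical
  have h := Finset.card_le_card_of_injOn
    (f := fun w : Fin T → Fin b => fun j : Fin (T - k) => w ⟨k + j.1, by omega⟩)
    (s := Finset.univ.filter fun w : Fin T → Fin b => ∀ i, w (Fin.castLE hk i) = v i)
    (t := (Finset.univ : Finset (Fin (T - k) → Fin b)))
    (fun w _ => Finset.mem_univ _) ?_
  · simpa using h
  · intro w1 h1 w2 h2 heq
    simp only [Finset.mem_coe, Finset.mem_filter] at h1 h2
    funext i
    by_cases hi : i.1 < k
    · have e1 := h1.2 ⟨i.1, hi⟩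
      have e2 := h2.2 ⟨i.1, hi⟩
      have hcast : Fin.castLE hk ⟨i.1, hi⟩ = i := rfl
      rw [hcast] at e1 e2
      rw [e1, e2]
    · have hj : i.1 - k < T - k := by omega
      have hfi : (⟨k + (i.1 - k), by omega⟩ : Fin T) = i := by
        apply Fin.ext; simp; omega
      have := congrFun heq ⟨i.1 - k, hj⟩
      simpa [hfi] using this

lemma kept_ne (b s k : ℕ) (hb : 2 ≤ b) (hs : 1 ≤ s) (u : Fin s → Fin b) :
    (Finset.univ.filter (prunedKept b s k u)).Nonempty := by
  classical
  haveI : Nontrivial (Fin b) := Fin.nontrivial_iff_two_le.mpr hb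
  obtain ⟨a, ha⟩ := exists_ne (u ⟨0, hs⟩)
  refine ⟨fun _ => a, ?_⟩
  simp only [Finset.mem_filter, Finset.mem_univ, true_and]
  exact fun h => ⟨⟨0, hs⟩, ha⟩

lemma kept_restrict (b s k T : ℕ) (hk : k ≤ T) (u : Fin s → Fin b)
    (w : Fin T → Fin b) (hw : prunedKept b s T u w) :
    prunedKept b s k u (fun i => w (Fin.castLE hk i)) := by
  intro h
  obtain ⟨i, hi⟩ := hw (h.trans hk)
  exact ⟨i, hi⟩

lemma leaf_card (b s T : ℕ) (hsT : s ≤ T) (u : Fin s → Fin b) :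
    b ^ T ≤ (Finset.univ.filter (prunedKept b s T u)).card + b ^ (T - s) := by
  classical
  have h1 := Finset.card_filter_add_card_filter_not
    (s := (Finset.univ : Finset (Fin T → Fin b))) (p := prunedKept b s T u)
  have h2 : (Finset.univ.filter (fun w => ¬ prunedKept b s T u w)).card ≤ b ^ (T - s) := by
    refine le_trans (Finset.card_le_card ?_) (cardA hsT u)
    intro w hw
    simp only [Finset.mem_filter, Finset.mem_univ, true_and] at hw ⊢
    unfold prunedKept at hw
    push_neg at hw
    obtain ⟨h, hall⟩ := hw
    exact fun i => hall i
  have hcard : (Finset.univ : Finset (Fin T → Fin b)).card = b ^ T := by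
    simp
  omega

-- per-depth fiber bound
lemma step4 (b s T : ℕ) (u : Fin s → Fin b) {k : ℕ} (hk : k ≤ T)
    (x : (Fin k → Fin b) → ℝ) (hx : ∀ v, 0 ≤ x v) :
    ∑ w ∈ Finset.univ.filter (prunedKept b s T u), x (fun i => w (Fin.castLE hk i))
      ≤ (b : ℝ) ^ (T - k) * ∑ v ∈ Finset.univ.filter (prunedKept b s k u), x v := by
  classical
  set L := Finset.univ.filter (prunedKept b s T u) with hL
  set K := Finset.univ.filter (prunedKept b s k u) with hK
  have hmaps : ∀ w ∈ L, (fun i => w (Fin.castLE hk i)) ∈ K := by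
    intro w hw
    simp only [hL, hK, Finset.mem_filter, Finset.mem_univ, true_and] at hw ⊢
    exact kept_restrict b s k T hk u w hw
  rw [← Finset.sum_fiberwise_of_maps_to hmaps (fun w => x (fun i => w (Fin.castLE hk i)))]
  rw [Finset.mul_sum]
  apply Finset.sum_le_sum
  intro v hv
  have hconst : ∑ w ∈ L.filter (fun w => (fun i => w (Fin.castLE hk i)) = v),
      x (fun i => w (Fin.castLE hk i))
      = ((L.filter (fun w => (fun i => w (Fin.castLE hk i)) = v)).card : ℝ) * x v := by
    rw [Finset.sum_congr rfl (fun w hw => by rw [(Finset.mem_filter.mp hw).2]),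
      Finset.sum_const, nsmul_eq_mul]
  rw [hconst]
  have hsub : L.filter (fun w => (fun i => w (Fin.castLE hk i)) = v) ⊆
      Finset.univ.filter fun w : Fin T → Fin b => ∀ i, w (Fin.castLE hk i) = v i := by
    intro w hw
    simp only [Finset.mem_filter, Finset.mem_univ, true_and]
    exact fun i => congrFun (Finset.mem_filter.mp hw).2 i
  have hcard : ((L.filter (fun w => (fun i => w (Fin.castLE hk i)) = v)).card : ℝ)
      ≤ (b : ℝ) ^ (T - k) := by
    have := le_trans (Finset.card_le_card hsub) (cardA hk v)
    exact_mod_cast this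
  exact mul_le_mul_of_nonneg_right hcard (hx v) |>.trans_eq rfl

theorem pruned_tree_average_bound (b s T : ℕ) (hb : 2 ≤ b) (hs : 1 ≤ s) (hsT : s ≤ T)
    (u : Fin s → Fin b) (ℓ : ℝ)
    (x : (k : ℕ) → (Fin k → Fin b) → ℝ)
    (hx : ∀ k (v : Fin k → Fin b), 0 ≤ x k v)
    (hpath : ∀ w : Fin T → Fin b, prunedKept b s T u w →
      ℓ ≤ ∑ k ∈ (Finset.Icc 1 T).attach,
        x k.1 (fun i : Fin k.1 => w (Fin.castLE (Finset.mem_Icc.mp k.2).2 i))) :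
    (1 - (b : ℝ) ^ (-(s : ℤ))) * ℓ ≤
      ∑ k ∈ Finset.Icc 1 T,
        (∑ v ∈ Finset.univ.filter (prunedKept b s k u), x k v) /
          ((Finset.univ.filter (prunedKept b s k u) :
            Finset (Fin k → Fin b)).card : ℝ) := by
  classical
  have hb0 : (0 : ℝ) < b := by positivity
  have hbs1 : (b : ℝ) ^ (-(s : ℤ)) ≤ 1 := by
    rw [zpow_neg]
    have h1 : (1 : ℝ) ≤ (b : ℝ) ^ (s : ℤ) := by
      apply one_le_zpow₀
      · exact_mod_cast Nat.one_le_cast.mpr (by omega)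
      · positivity
    exact inv_le_one_of_one_le₀ h1
  have hterm : ∀ k, 0 ≤ (∑ v ∈ Finset.univ.filter (prunedKept b s k u), x k v) /
      ((Finset.univ.filter (prunedKept b s k u) : Finset (Fin k → Fin b)).card : ℝ) :=
    fun k => div_nonneg (Finset.sum_nonneg fun v _ => hx k v) (by positivity)
  have hRHS : 0 ≤ ∑ k ∈ Finset.Icc 1 T,
      (∑ v ∈ Finset.univ.filter (prunedKept b s k u), x k v) /
        ((Finset.univ.filter (prunedKept b s k u) : Finset (Fin k → Fin b)).card : ℝ) :=
    Finset.sum_nonneg fun k _ => hterm k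
  rcases le_or_gt ℓ 0 with hl | hl
  · exact le_trans (mul_nonpos_of_nonneg_of_nonpos (by linarith) hl) hRHS
  -- main case : 0 < ℓ
  set L := Finset.univ.filter (prunedKept b s T u) with hLdef
  -- step 1 : count bound
  have hLc : (b : ℝ) ^ T - (b : ℝ) ^ (T - s) ≤ (L.card : ℝ) := by
    have h := leaf_card b s T hsT u
    have : (b : ℝ) ^ T ≤ (L.card : ℝ) + (b : ℝ) ^ (T - s) := by exact_mod_cast h
    linarith
  -- step 2 : ℓ * L.card ≤ sum over leaves
  have hstep2 : (L.card : ℝ) * ℓ ≤ ∑ w ∈ L, ∑ k ∈ (Finset.Icc 1 T).attach,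
      x k.1 (fun i : Fin k.1 => w (Fin.castLE (Finset.mem_Icc.mp k.2).2 i)) := by
    have := Finset.card_nsmul_le_sum L
      (fun w => ∑ k ∈ (Finset.Icc 1 T).attach,
        x k.1 (fun i : Fin k.1 => w (Fin.castLE (Finset.mem_Icc.mp k.2).2 i))) ℓ
      (fun w hw => hpath w (by simpa [hLdef] using hw))
    simpa [nsmul_eq_mul] using this
  -- step 3 : swap and bound per depth
  have hswap : ∑ w ∈ L, ∑ k ∈ (Finset.Icc 1 T).attach,
      x k.1 (fun i : Fin k.1 => w (Fin.castLE (Finset.mem_Icc.mp k.2).2 i))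
      = ∑ k ∈ (Finset.Icc 1 T).attach, ∑ w ∈ L,
      x k.1 (fun i : Fin k.1 => w (Fin.castLE (Finset.mem_Icc.mp k.2).2 i)) :=
    Finset.sum_comm
  have hstep4 : ∀ k : {x // x ∈ Finset.Icc 1 T},
      ∑ w ∈ L, x k.1 (fun i : Fin k.1 => w (Fin.castLE (Finset.mem_Icc.mp k.2).2 i))
      ≤ (b : ℝ) ^ T * ((∑ v ∈ Finset.univ.filter (prunedKept b s k.1 u), x k.1 v) /
          ((Finset.univ.filter (prunedKept b s k.1 u) : Finset (Fin k.1 → Fin b)).card : ℝ)) := by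
    intro k
    obtain ⟨hk1, hk2⟩ := Finset.mem_Icc.mp k.2
    have h4 := step4 b s T u hk2 (x k.1) (fun v => hx k.1 v)
    refine h4.trans ?_
    set N := (Finset.univ.filter (prunedKept b s k.1 u) : Finset (Fin k.1 → Fin b))
    have hN0 : (0 : ℝ) < (N.card : ℝ) := by
      have := kept_ne b s k.1 hb hs u
      exact_mod_cast Finset.card_pos.mpr this
    have hNle : (N.card : ℝ) ≤ (b : ℝ) ^ k.1 := by
      have : N.card ≤ b ^ k.1 := by
        have := Finset.card_le_card (Finset.filter_subset (prunedKept b s k.1 u) Finset.univ)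
        simpa using this
      exact_mod_cast this
    have hS0 : 0 ≤ ∑ v ∈ N, x k.1 v := Finset.sum_nonneg fun v _ => hx k.1 v
    have hdiv : (∑ v ∈ N, x k.1 v) / (b : ℝ) ^ k.1 ≤ (∑ v ∈ N, x k.1 v) / (N.card : ℝ) :=
      div_le_div_of_nonneg_left hS0 hN0 hNle
    have hpow : (b : ℝ) ^ T = (b : ℝ) ^ (T - k.1) * (b : ℝ) ^ k.1 := by
      rw [← pow_add]; congr 1; omega
    calc (b : ℝ) ^ (T - k.1) * ∑ v ∈ N, x k.1 v
        = (b : ℝ) ^ T * ((∑ v ∈ N, x k.1 v) / (b : ℝ) ^ k.1) := by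
          rw [hpow]; field_simp
      _ ≤ (b : ℝ) ^ T * ((∑ v ∈ N, x k.1 v) / (N.card : ℝ)) := by
          apply mul_le_mul_of_nonneg_left hdiv (by positivity)
  -- assemble
  have hmain : (L.card : ℝ) * ℓ ≤ (b : ℝ) ^ T * ∑ k ∈ Finset.Icc 1 T,
      (∑ v ∈ Finset.univ.filter (prunedKept b s k u), x k v) /
        ((Finset.univ.filter (prunedKept b s k u) : Finset (Fin k → Fin b)).card : ℝ) := by
    refine hstep2.trans ?_
    rw [hswap]
    calc ∑ k ∈ (Finset.Icc 1 T).attach, ∑ w ∈ L,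
          x k.1 (fun i : Fin k.1 => w (Fin.castLE (Finset.mem_Icc.mp k.2).2 i))
        ≤ ∑ k ∈ (Finset.Icc 1 T).attach, (b : ℝ) ^ T *
          ((∑ v ∈ Finset.univ.filter (prunedKept b s k.1 u), x k.1 v) /
            ((Finset.univ.filter (prunedKept b s k.1 u) : Finset (Fin k.1 → Fin b)).card : ℝ)) :=
          Finset.sum_le_sum fun k _ => hstep4 k
      _ = (b : ℝ) ^ T * ∑ k ∈ (Finset.Icc 1 T).attach,
          ((∑ v ∈ Finset.univ.filter (prunedKept b s k.1 u), x k.1 v) /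
            ((Finset.univ.filter (prunedKept b s k.1 u) : Finset (Fin k.1 → Fin b)).card : ℝ)) := by
          rw [Finset.mul_sum]
      _ = _ := by
          rw [Finset.sum_attach (Finset.Icc 1 T) (fun k =>
            (∑ v ∈ Finset.univ.filter (prunedKept b s k u), x k v) /
              ((Finset.univ.filter (prunedKept b s k u) : Finset (Fin k → Fin b)).card : ℝ))]
  -- from hLc : (b^T - b^(T-s)) ≤ L.card, and ℓ > 0:
  have hfinal : ((b : ℝ) ^ T - (b : ℝ) ^ (T - s)) * ℓ ≤ (b : ℝ) ^ T * ∑ k ∈ Finset.Icc 1 T,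
      (∑ v ∈ Finset.univ.filter (prunedKept b s k u), x k v) /
        ((Finset.univ.filter (prunedKept b s k u) : Finset (Fin k → Fin b)).card : ℝ) := by
    refine le_trans ?_ hmain
    exact mul_le_mul_of_nonneg_right hLc hl.le
  have hpows : ((b : ℝ) ^ T - (b : ℝ) ^ (T - s)) = (1 - (b : ℝ) ^ (-(s : ℤ))) * (b : ℝ) ^ T := by
    have hbne : (b : ℝ) ≠ 0 := ne_of_gt hb0
    rw [zpow_neg, zpow_natCast, sub_mul, one_mul]
    congr 1
    rw [inv_mul_eq_div, eq_div_iff (by positivity), ← pow_add]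
    congr 1; omega
  rw [hpows] at hfinal
  have hbT : (0 : ℝ) < (b : ℝ) ^ T := by positivity
  nlinarith [hfinal, hbT]
end

section
/- Let b ≥ 2, α > 1, T ≥ s ≥ 1, and let t be the b-ary tree of depth T pruned at a vertex of depth s. For any labels x_v ≥ 0 on vertices of t such that every root-to-leaf path sum (to depth T) is at least ℓ > 0, one has ∑_{v ∈ t} x_v^α ≥ (1 - b^{-s})^{α+1} (b^{1/(α-1)} - 1)^{α-1} ℓ^α. -/
open scoped Classical

open Finset

lemma restr_card {T k : ℕ} (hk : k ≤ T) :
    Fintype.card {j : Fin T // ¬ ((j : ℕ) < k)} = T - k := by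
  have e : {j : Fin T // ¬ ((j : ℕ) < k)} ≃ Fin (T - k) :=
    { toFun := fun j => ⟨(j.1 : ℕ) - k, by have := j.1.2; have := j.2; omega⟩
      invFun := fun m => ⟨⟨k + m.1, by have := m.2; omega⟩, by simp⟩
      left_inv := fun j => by
        ext
        have := j.2
        simp only []
        omega
      right_inv := fun m => by ext; simp }
  rw [Fintype.card_congr e, Fintype.card_fin]

lemma restr_sum {b T k : ℕ} (hk : k ≤ T) (f : (Fin k → Fin b) → ℝ) :
    ∑ w : Fin T → Fin b, f (fun i : Fin k => w (Fin.castLE hk i))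
      = (b : ℝ) ^ (T - k) * ∑ v : Fin k → Fin b, f v := by
  classical
  set p : Fin T → Prop := fun j => (j : ℕ) < k with hp
  set e := Equiv.piEquivPiSubtypeProd p (fun _ : Fin T => Fin b) with he
  have step1 : ∑ w : Fin T → Fin b, f (fun i : Fin k => w (Fin.castLE hk i))
      = ∑ q : (∀ j : {j : Fin T // p j}, Fin b) × (∀ j : {j : Fin T // ¬ p j}, Fin b),
          f (fun i : Fin k => e.symm q (Fin.castLE hk i)) :=
    (Equiv.sum_comp e.symm (fun w => f (fun i : Fin k => w (Fin.castLE hk i)))).symm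
  have hpt : ∀ (i : Fin k), p (Fin.castLE hk i) := fun i => by
    simp only [hp, Fin.coe_castLE]; exact i.2
  have step2 : ∀ (a : ∀ j : {j : Fin T // p j}, Fin b)
      (c : ∀ j : {j : Fin T // ¬ p j}, Fin b) (i : Fin k),
      e.symm (a, c) (Fin.castLE hk i) = a ⟨Fin.castLE hk i, hpt i⟩ := by
    intro a c i
    rw [he]
    simp [Equiv.piEquivPiSubtypeProd_symm_apply, dif_pos (hpt i)]
  rw [step1, Fintype.sum_prod_type]
  have step3 : ∀ a : (∀ j : {j : Fin T // p j}, Fin b),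
      (∑ c : ∀ j : {j : Fin T // ¬ p j}, Fin b,
        f (fun i : Fin k => e.symm (a, c) (Fin.castLE hk i)))
      = (b : ℝ) ^ (T - k) * f (fun i : Fin k => a ⟨Fin.castLE hk i, hpt i⟩) := by
    intro a
    have : ∀ c : (∀ j : {j : Fin T // ¬ p j}, Fin b),
        f (fun i : Fin k => e.symm (a, c) (Fin.castLE hk i))
          = f (fun i : Fin k => a ⟨Fin.castLE hk i, hpt i⟩) := by
      intro c; congr 1; funext i; exact step2 a c i
    rw [Finset.sum_congr rfl (fun c _ => this c), Finset.sum_const, nsmul_eq_mul]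
    congr 1
    rw [Finset.card_univ, Fintype.card_fun, restr_card hk, Fintype.card_fin]
    push_cast
    ring
  rw [Finset.sum_congr rfl (fun a _ => step3 a), ← Finset.mul_sum]
  congr 1
  let d : (Fin k → Fin b) ≃ ({j : Fin T // p j} → Fin b) :=
    { toFun := fun v => fun j => v ⟨(j.1 : ℕ), j.2⟩
      invFun := fun a => fun i => a ⟨Fin.castLE hk i, hpt i⟩
      left_inv := fun v => by funext i; congr 1
      right_inv := fun a => by funext j; congr 1 }
  have := Equiv.sum_comp d (fun a => f (fun i : Fin k => a ⟨Fin.castLE hk i, hpt i⟩))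
  rw [← this]
  apply Finset.sum_congr rfl
  intro v _
  rfl

lemma m_mono {a m M α : ℝ} (ha : 0 ≤ a) (hm : 0 < m) (hmM : m ≤ M) (hα : 1 < α) :
    M * (a / M) ^ α ≤ m * (a / m) ^ α := by
  have hM : 0 < M := lt_of_lt_of_le hm hmM
  have h1 : ∀ c : ℝ, 0 < c → c * (a / c) ^ α = a ^ α * c ^ (1 - α) := by
    intro c hc
    rw [Real.div_rpow ha hc.le, Real.rpow_sub hc, Real.rpow_one]
    ring
  rw [h1 M hM, h1 m hm]
  exact mul_le_mul_of_nonneg_left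
    (Real.rpow_le_rpow_of_nonpos hm hmM (by linarith)) (Real.rpow_nonneg ha α)

set_option maxHeartbeats 1000000 in
theorem pruned_tree_power_sum_bound (b s T : ℕ) (hb : 2 ≤ b) (hs : 1 ≤ s) (hsT : s ≤ T)
    (α : ℝ) (hα : 1 < α) (u : Fin s → Fin b) (ℓ : ℝ) (hℓ : 0 < ℓ)
    (x : (k : ℕ) → (Fin k → Fin b) → ℝ)
    (hx : ∀ k (v : Fin k → Fin b), 0 ≤ x k v)
    (hpath : ∀ w : Fin T → Fin b, prunedKept b s T u w →
      ℓ ≤ ∑ k ∈ (Finset.Icc 1 T).attach,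
        x k.1 (fun i : Fin k.1 => w (Fin.castLE (Finset.mem_Icc.mp k.2).2 i))) :
    (1 - (b : ℝ) ^ (-(s : ℤ))) ^ (α + 1) * ((b : ℝ) ^ (1 / (α - 1)) - 1) ^ (α - 1) * ℓ ^ α ≤
      ∑ k ∈ Finset.Icc 1 T, ∑ v ∈ Finset.univ.filter (prunedKept b s k u), x k v ^ α := by
  classical
  have hB1 : (1 : ℝ) < (b : ℝ) := by exact_mod_cast Nat.lt_of_lt_of_le one_lt_two hb
  have hB0 : (0 : ℝ) < (b : ℝ) := lt_trans one_pos hB1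
  have hα0 : (0 : ℝ) < α := lt_trans one_pos hα
  have hα1 : (0 : ℝ) < α - 1 := by linarith
  set B : ℝ := (b : ℝ) with hBdef
  set K : Finset ℕ := Finset.Icc 1 T with hK
  set A : ℕ → ℝ := fun k => ∑ v ∈ Finset.univ.filter (prunedKept b s k u), x k v with hA
  have hA0 : ∀ k, 0 ≤ A k := fun k => Finset.sum_nonneg fun v _ => hx k v
  set y : ℕ → ℝ := fun k => A k / B ^ k with hy
  have hy0 : ∀ k, 0 ≤ y k := fun k => div_nonneg (hA0 k) (by positivity)
  -- restriction of a kept leaf is kept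
  have keptRestr : ∀ (k : ℕ) (hk : k ≤ T) (w : Fin T → Fin b), prunedKept b s T u w →
      prunedKept b s k u (fun i : Fin k => w (Fin.castLE hk i)) := by
    intro k hk w hw hsk
    obtain ⟨i, hi⟩ := hw hsT
    refine ⟨i, ?_⟩
    show w (Fin.castLE hk (Fin.castLE hsk i)) ≠ u i
    rwa [Fin.castLE_castLE]
  -- cardinality of the kept leaves
  have hiff : ∀ w : Fin T → Fin b,
      prunedKept b s T u w ↔ ¬ ((fun i : Fin s => w (Fin.castLE hsT i)) = u) := by
    intro w
    constructor
    · intro h hc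
      obtain ⟨i, hi⟩ := h hsT
      exact hi (congrFun hc i)
    · intro h hsT'
      by_contra hc
      push_neg at hc
      exact h (funext fun i => hc i)
  have cardST : (((Finset.univ.filter (prunedKept b s T u)).card : ℝ)) = B ^ T - B ^ (T - s) := by
    have h2 : ∑ w : Fin T → Fin b,
        (if (fun i : Fin s => w (Fin.castLE hsT i)) = u then (1:ℝ) else 0)
        = B ^ (T - s) * ∑ v : Fin s → Fin b, (if v = u then (1:ℝ) else 0) :=
      restr_sum hsT (fun v => if v = u then (1:ℝ) else 0)
    have h3 : ∑ v : Fin s → Fin b, (if v = u then (1:ℝ) else 0) = 1 := by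
      simp
    rw [h3, mul_one] at h2
    rw [Finset.card_filter]
    push_cast
    have h4 : ∀ w : Fin T → Fin b, (if prunedKept b s T u w then (1:ℝ) else 0)
        = 1 - (if (fun i : Fin s => w (Fin.castLE hsT i)) = u then (1:ℝ) else 0) := by
      intro w
      by_cases hc : (fun i : Fin s => w (Fin.castLE hsT i)) = u
      · rw [if_pos hc, if_neg (fun hkept => ((hiff w).1 hkept) hc)]
        norm_num
      · rw [if_neg hc, if_pos ((hiff w).2 hc)]
        norm_num
    rw [Finset.sum_congr rfl (fun w _ => h4 w), Finset.sum_sub_distrib, h2,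
      Finset.sum_const, Finset.card_univ, Fintype.card_fun, Fintype.card_fin,
      Fintype.card_fin, nsmul_eq_mul, mul_one]
    push_cast
    ring
  -- averaging inequality
  have avg : (B ^ T - B ^ (T - s)) * ℓ ≤ ∑ k ∈ K.attach, B ^ (T - k.1) * A k.1 := by
    have step1 : (((Finset.univ.filter (prunedKept b s T u)).card : ℝ)) * ℓ ≤
        ∑ w ∈ Finset.univ.filter (prunedKept b s T u), ∑ k ∈ K.attach,
          x k.1 (fun i : Fin k.1 => w (Fin.castLE (Finset.mem_Icc.mp k.2).2 i)) := by
      rw [← nsmul_eq_mul]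
      exact Finset.card_nsmul_le_sum _ _ _
        (fun w hw => hpath w (by simpa using (Finset.mem_filter.mp hw).2))
    have inner : ∀ k : {z // z ∈ K}, ∑ w ∈ Finset.univ.filter (prunedKept b s T u),
        x k.1 (fun i : Fin k.1 => w (Fin.castLE (Finset.mem_Icc.mp k.2).2 i))
        ≤ B ^ (T - k.1) * A k.1 := by
      intro k
      have hkT : k.1 ≤ T := (Finset.mem_Icc.mp k.2).2
      have e2 : ∑ w : Fin T → Fin b,
          (if prunedKept b s k.1 u (fun i : Fin k.1 => w (Fin.castLE hkT i))
            then x k.1 (fun i : Fin k.1 => w (Fin.castLE hkT i)) else 0)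
          = B ^ (T - k.1) * ∑ v : Fin k.1 → Fin b,
              (if prunedKept b s k.1 u v then x k.1 v else 0) :=
        restr_sum hkT (fun v => if prunedKept b s k.1 u v then x k.1 v else 0)
      have e1 : ∑ w ∈ Finset.univ.filter (prunedKept b s T u),
          x k.1 (fun i : Fin k.1 => w (Fin.castLE hkT i))
          ≤ ∑ w : Fin T → Fin b,
            (if prunedKept b s k.1 u (fun i : Fin k.1 => w (Fin.castLE hkT i))
              then x k.1 (fun i : Fin k.1 => w (Fin.castLE hkT i)) else 0) := by
        rw [← Finset.sum_filter]
        apply Finset.sum_le_sum_of_subset_of_nonneg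
        · intro w hw
          simp only [Finset.mem_filter, Finset.mem_univ, true_and] at hw ⊢
          exact keptRestr k.1 hkT w hw
        · intro w _ _
          exact hx _ _
      calc ∑ w ∈ Finset.univ.filter (prunedKept b s T u),
            x k.1 (fun i : Fin k.1 => w (Fin.castLE (Finset.mem_Icc.mp k.2).2 i))
          ≤ ∑ w : Fin T → Fin b,
            (if prunedKept b s k.1 u (fun i : Fin k.1 => w (Fin.castLE hkT i))
              then x k.1 (fun i : Fin k.1 => w (Fin.castLE hkT i)) else 0) := e1
        _ = B ^ (T - k.1) * ∑ v : Fin k.1 → Fin b,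
              (if prunedKept b s k.1 u v then x k.1 v else 0) := e2
        _ = B ^ (T - k.1) * A k.1 := by
            rw [hA]
            simp [Finset.sum_filter]
    calc (B ^ T - B ^ (T - s)) * ℓ
        = (((Finset.univ.filter (prunedKept b s T u)).card : ℝ)) * ℓ := by rw [cardST]
      _ ≤ ∑ w ∈ Finset.univ.filter (prunedKept b s T u), ∑ k ∈ K.attach,
          x k.1 (fun i : Fin k.1 => w (Fin.castLE (Finset.mem_Icc.mp k.2).2 i)) := step1
      _ = ∑ k ∈ K.attach, ∑ w ∈ Finset.univ.filter (prunedKept b s T u),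
          x k.1 (fun i : Fin k.1 => w (Fin.castLE (Finset.mem_Icc.mp k.2).2 i)) :=
          Finset.sum_comm
      _ ≤ ∑ k ∈ K.attach, B ^ (T - k.1) * A k.1 := Finset.sum_le_sum fun k _ => inner k
  -- convert to Y
  have hKne : K.Nonempty := ⟨1, by simp [hK]; omega⟩
  set Y : ℝ := ∑ k ∈ K, y k with hY
  set δ : ℝ := 1 - (B ^ s)⁻¹ with hδ
  have hδpos : 0 < δ := by
    have h2 : (B ^ s)⁻¹ < 1 := by
      rw [inv_lt_one_iff₀]
      right
      exact one_lt_pow₀ hB1 (by omega)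
    rw [hδ]; linarith
  have hδ1 : δ ≤ 1 := by
    have h2 : 0 < (B ^ s)⁻¹ := by positivity
    rw [hδ]; linarith
  have hYℓ : δ * ℓ ≤ Y := by
    have hps : B ^ (T - s) * B ^ s = B ^ T := by
      rw [← pow_add]
      congr 1
      omega
    have key : δ * B ^ T = B ^ T - B ^ (T - s) := by
      rw [hδ, sub_mul, one_mul]
      congr 1
      rw [inv_mul_eq_div, div_eq_iff (by positivity : (B:ℝ) ^ s ≠ 0)]
      linarith [hps]
    have hterm : ∀ k ∈ K, B ^ (T - k) * A k = B ^ T * y k := by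
      intro k hk
      have hkT : k ≤ T := (Finset.mem_Icc.mp (hK ▸ hk)).2
      have hpk : B ^ (T - k) * B ^ k = B ^ T := by
        rw [← pow_add]
        congr 1
        omega
      have hBk : (B:ℝ) ^ k ≠ 0 := by positivity
      rw [hy]
      calc B ^ (T - k) * A k = B ^ (T - k) * ((A k / B ^ k) * B ^ k) := by
            rw [div_mul_cancel₀ _ hBk]
        _ = (B ^ (T - k) * B ^ k) * (A k / B ^ k) := by ring
        _ = B ^ T * (A k / B ^ k) := by rw [hpk]
    have h4 : B ^ T * (δ * ℓ) ≤ B ^ T * Y := by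
      calc B ^ T * (δ * ℓ) = (δ * B ^ T) * ℓ := by ring
        _ = (B ^ T - B ^ (T - s)) * ℓ := by rw [key]
        _ ≤ ∑ k ∈ K.attach, B ^ (T - k.1) * A k.1 := avg
        _ = ∑ k ∈ K, B ^ (T - k) * A k := Finset.sum_attach K (fun k => B ^ (T - k) * A k)
        _ = ∑ k ∈ K, B ^ T * y k := Finset.sum_congr rfl hterm
        _ = B ^ T * Y := by rw [hY, Finset.mul_sum]
    exact le_of_mul_le_mul_left h4 (pow_pos hB0 T)
  -- per-level convexity
  have level : ∀ k ∈ K, B ^ k * y k ^ α ≤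
      ∑ v ∈ Finset.univ.filter (prunedKept b s k u), x k v ^ α := by
    intro k hk
    set S := Finset.univ.filter (prunedKept b s k u) with hS
    by_cases hn : S.card = 0
    · have hSe : S = ∅ := Finset.card_eq_zero.mp hn
      have hAk : A k = 0 := by
        simp only [hA]
        rw [← hS, hSe]
        simp
      simp only [hy, hAk, zero_div]
      rw [Real.zero_rpow (ne_of_gt hα0), mul_zero, hSe]
      simp
    · have hn1 : (0:ℝ) < (S.card : ℝ) := by positivity
      have hwsum : ∑ _v ∈ S, ((S.card : ℝ))⁻¹ = 1 := by
        rw [Finset.sum_const, nsmul_eq_mul]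
        field_simp
      have jensen := Real.rpow_arith_mean_le_arith_mean_rpow S
        (fun _ => ((S.card : ℝ))⁻¹) (fun v => x k v)
        (fun v _ => by positivity) hwsum (fun v _ => hx k v) hα.le
      have hsum : ∑ v ∈ S, ((S.card : ℝ))⁻¹ * x k v = A k / (S.card : ℝ) := by
        rw [← Finset.mul_sum, inv_mul_eq_div]
      rw [hsum, ← Finset.mul_sum] at jensen
      have main : (S.card : ℝ) * (A k / (S.card : ℝ)) ^ α ≤ ∑ v ∈ S, x k v ^ α := by
        calc (S.card : ℝ) * (A k / (S.card : ℝ)) ^ α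
            ≤ (S.card : ℝ) * ((S.card : ℝ)⁻¹ * ∑ v ∈ S, x k v ^ α) :=
              mul_le_mul_of_nonneg_left jensen hn1.le
          _ = ∑ v ∈ S, x k v ^ α := by field_simp
      have hcard : (S.card : ℝ) ≤ B ^ k := by
        have h8 := Finset.card_le_univ S
        have h7 : Fintype.card (Fin k → Fin b) = b ^ k := by
          rw [Fintype.card_fun, Fintype.card_fin, Fintype.card_fin]
        rw [h7] at h8
        rw [hBdef]
        exact_mod_cast h8
      calc B ^ k * y k ^ α = B ^ k * (A k / B ^ k) ^ α := by rw [hy]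
        _ ≤ (S.card : ℝ) * (A k / (S.card : ℝ)) ^ α := m_mono (hA0 k) hn1 hcard hα
        _ ≤ ∑ v ∈ S, x k v ^ α := main
  -- Hölder step
  set bα : ℝ := B ^ (1 / (α - 1)) with hbα
  have hbα1 : 1 < bα := by
    rw [hbα]
    exact Real.one_lt_rpow_iff_of_pos hB0 |>.2 (Or.inl ⟨hB1, one_div_pos.2 hα1⟩)
  set Q : ℝ := ∑ k ∈ K, B ^ k * y k ^ α with hQ
  have hQ0 : 0 ≤ Q := Finset.sum_nonneg fun k _ => mul_nonneg (by positivity) (Real.rpow_nonneg (hy0 k) _)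
  have holder : (bα - 1) ^ (α - 1) * Y ^ α ≤ Q := by
    set r : ℝ := B ^ (-(1 / (α - 1))) with hr
    have hr0 : 0 < r := Real.rpow_pos_of_pos hB0 _
    have hrb : r = bα⁻¹ := by rw [hr, hbα, Real.rpow_neg hB0.le]
    have hbα0 : 0 < bα := lt_trans one_pos hbα1
    have hr1 : r < 1 := by
      rw [hrb, inv_lt_one_iff₀]
      right
      exact hbα1
    set W : ℝ := ∑ j ∈ K, r ^ j with hW
    have hW0 : 0 < W := Finset.sum_pos (fun j _ => pow_pos hr0 j) hKne
    have h1r : 0 < 1 - r := by linarith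
    have hWle : W ≤ 1 / (bα - 1) := by
      have hgeom : ∑ i ∈ Finset.range T, r ^ i ≤ 1 / (1 - r) := by
        have hch : (r ^ T - 1) / (r - 1) = (1 - r ^ T) / (1 - r) := by
          rw [← neg_div_neg_eq]
          ring_nf
        rw [geom_sum_eq (ne_of_lt hr1) T, hch, div_le_div_iff₀ h1r h1r]
        have hrT : 0 ≤ r ^ T := by positivity
        nlinarith
      have hIcc : W = r * ∑ i ∈ Finset.range T, r ^ i := by
        rw [hW, hK, ← Finset.Ico_add_one_right_eq_Icc, Finset.sum_Ico_eq_sum_range]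
        rw [Finset.mul_sum]
        apply Finset.sum_congr rfl
        intro i _
        rw [add_comm 1 i, pow_succ]
        ring
      calc W = r * ∑ i ∈ Finset.range T, r ^ i := hIcc
        _ ≤ r * (1 / (1 - r)) := mul_le_mul_of_nonneg_left hgeom hr0.le
        _ = 1 / (bα - 1) := by
            rw [hrb]
            have h9 : bα - 1 ≠ 0 := by linarith
            have h10 : (1:ℝ) - bα⁻¹ ≠ 0 := by rw [← hrb]; linarith
            field_simp
      -- end hWle
    set w : ℕ → ℝ := fun j => r ^ j / W with hwdef
    set z : ℕ → ℝ := fun j => y j * W / r ^ j with hzdef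
    have hwnn : ∀ j ∈ K, 0 ≤ w j := fun j _ => by
      simp only [hwdef]; positivity
    have hwsum : ∑ j ∈ K, w j = 1 := by
      simp only [hwdef]
      rw [← Finset.sum_div, ← hW, div_self hW0.ne']
    have hznn : ∀ j ∈ K, 0 ≤ z j := fun j _ => by
      simp only [hzdef]
      exact div_nonneg (mul_nonneg (hy0 j) hW0.le) (pow_pos hr0 j).le
    have hwz : ∀ j ∈ K, w j * z j = y j := by
      intro j _
      simp only [hwdef, hzdef]
      have h1 : (r:ℝ) ^ j ≠ 0 := (pow_pos hr0 j).ne'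
      field_simp
    have key : ∀ j : ℕ, (r ^ j) ^ (1 - α) = B ^ j := by
      intro j
      have e1 : r ^ j = B ^ (-(1 / (α - 1)) * (j:ℝ)) := by
        rw [Real.rpow_mul hB0.le, Real.rpow_natCast, hr]
      have hαj : (-(1 / (α - 1)) * (j:ℝ)) * (1 - α) = (j:ℝ) := by
        field_simp
        ring
      rw [e1, ← Real.rpow_natCast B j, ← Real.rpow_mul hB0.le, hαj]
    have hterm : ∀ j ∈ K, w j * z j ^ α = W ^ (α - 1) * (B ^ j * y j ^ α) := by
      intro j _
      have hrj : (0:ℝ) < r ^ j := pow_pos hr0 j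
      have h3 : (r ^ j) ^ α = r ^ j / B ^ j := by
        rw [eq_div_iff (by positivity : (B:ℝ) ^ j ≠ 0), ← key j,
          ← Real.rpow_add hrj]
        norm_num
      simp only [hwdef, hzdef]
      rw [Real.div_rpow (mul_nonneg (hy0 j) hW0.le) hrj.le,
        Real.mul_rpow (hy0 j) hW0.le, h3, Real.rpow_sub hW0, Real.rpow_one]
      have hBj : (0:ℝ) < B ^ j := by positivity
      field_simp
    have jensen := Real.rpow_arith_mean_le_arith_mean_rpow K w
      (fun j => z j) hwnn hwsum hznn hα.le
    have hLHS : ∑ j ∈ K, w j * z j = Y := by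
      rw [hY]; exact Finset.sum_congr rfl hwz
    have hRHS : ∑ j ∈ K, w j * z j ^ α = W ^ (α - 1) * Q := by
      rw [Finset.sum_congr rfl hterm, ← Finset.mul_sum, hQ]
    rw [hLHS, hRHS] at jensen
    have hbαW : bα - 1 ≤ 1 / W := by
      have h5 : W * (bα - 1) ≤ 1 := (le_div_iff₀ (by linarith : (0:ℝ) < bα - 1)).1 hWle
      rw [le_div_iff₀ hW0]
      linarith [h5]
    have h6 : (bα - 1) ^ (α - 1) ≤ (1 / W) ^ (α - 1) :=
      Real.rpow_le_rpow (by linarith) hbαW (by linarith)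
    have hYα : 0 ≤ Y ^ α := Real.rpow_nonneg (Finset.sum_nonneg fun j _ => hy0 j) α
    calc (bα - 1) ^ (α - 1) * Y ^ α
        ≤ (1 / W) ^ (α - 1) * (W ^ (α - 1) * Q) :=
          mul_le_mul h6 jensen hYα (Real.rpow_nonneg (by positivity) _)
      _ = ((1 / W) * W) ^ (α - 1) * Q := by
          rw [Real.mul_rpow (by positivity) hW0.le, mul_assoc]
      _ = Q := by rw [one_div_mul_cancel hW0.ne', Real.one_rpow, one_mul]
  -- combine
  have hYnn : 0 ≤ Y := Finset.sum_nonneg fun k _ => hy0 k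
  have hδℓ : 0 ≤ δ * ℓ := mul_nonneg hδpos.le hℓ.le
  have hzs : (1 : ℝ) - (b : ℝ) ^ (-(s : ℤ)) = δ := by
    rw [hδ, hBdef, zpow_neg, zpow_natCast]
  rw [hzs]
  have hQle : Q ≤ ∑ k ∈ K, ∑ v ∈ Finset.univ.filter (prunedKept b s k u), x k v ^ α :=
    Finset.sum_le_sum level
  have c1 : δ ^ (α + 1) ≤ δ ^ α := Real.rpow_le_rpow_of_exponent_ge hδpos hδ1 (by linarith)
  have c2 : (δ * ℓ) ^ α ≤ Y ^ α := Real.rpow_le_rpow hδℓ hYℓ hα0.le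
  have hbm : 0 ≤ (bα - 1) ^ (α - 1) := Real.rpow_nonneg (by linarith) _
  calc δ ^ (α + 1) * (bα - 1) ^ (α - 1) * ℓ ^ α
      ≤ δ ^ α * (bα - 1) ^ (α - 1) * ℓ ^ α := by
        apply mul_le_mul_of_nonneg_right (mul_le_mul_of_nonneg_right c1 hbm)
        exact Real.rpow_nonneg hℓ.le _
    _ = (bα - 1) ^ (α - 1) * ((δ * ℓ) ^ α) := by
        rw [Real.mul_rpow hδpos.le hℓ.le]; ring
    _ ≤ (bα - 1) ^ (α - 1) * Y ^ α := by
        exact mul_le_mul_of_nonneg_left c2 hbm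
    _ ≤ Q := holder
    _ ≤ _ := hQle
end
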